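/- Let X be a Tychonoff space, let U and V be disjoint open subsets of X, and let W be an open subset of βX such that W ∩ X = U ∪ V. Then W ∩ cl_{βX}(U) and W ∩ cl_{βX}(V) are disjoint open subsets of βX whose union is W. -/
import Mathlib

open Set Filter Topology

/-- Key lemma: a point of an open `W ⊆ βX` with `W ∩ X = U ∪ V` (`U, V` disjoint open in `X`)
cannot lie in both closures. -/
theorem key {X : Type*} [TopologicalSpace X] [T35Space X]
    (U V : Set X) (hU : IsOpen U) (hV : IsOpen V) (hdisj : Disjoint U V)
    (W : Set (StoneCech X)) (hW : IsOpen W)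
    (hWX : W ∩ Set.range (stoneCechUnit : X → StoneCech X) = stoneCechUnit '' (U ∪ V))
    {p : StoneCech X} (hpW : p ∈ W) (hpU : p ∈ closure (stoneCechUnit '' U))
    (hpV : p ∈ closure (stoneCechUnit '' V)) : False := by
  -- Urysohn function on βX
  obtain ⟨f, hf0, hf1, hf01⟩ :=
    exists_continuous_zero_one_of_isClosed (isClosed_compl_iff.2 hW) isClosed_singleton
      (disjoint_singleton_right.2 (by simpa using hpW))
  -- the function g on X: f ∘ unit on U, zero elsewhere
  set g : X → ℝ := U.indicator (f ∘ stoneCechUnit) with hg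
  have hgmem : ∀ x, g x ∈ Icc (0:ℝ) 1 := by
    intro x
    by_cases hx : x ∈ U
    · simp [hg, hx]; exact hf01 _
    · simp [hg, hx]
  have hnot : ∀ x : X, x ∉ U ∪ V → f (stoneCechUnit x) = 0 := by
    intro x hx
    by_contra h
    have hxW : stoneCechUnit x ∈ W := by
      by_contra hxw
      exact h (hf0 hxw)
    have : stoneCechUnit x ∈ stoneCechUnit '' (U ∪ V) := by
      rw [← hWX]; exact ⟨hxW, mem_range_self x⟩
    obtain ⟨y, hy, hyx⟩ := this
    exact hx (injective_stoneCechUnit_of_t35Space hyx ▸ hy)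
  have hgc : Continuous g := by
    rw [continuous_iff_continuousAt]
    intro x
    by_cases hxU : x ∈ U
    · have : g =ᶠ[𝓝 x] (f ∘ stoneCechUnit) :=
        eventually_of_mem (hU.mem_nhds hxU) (fun y hy => by simp [hg, hy])
      exact (((map_continuous f).comp continuous_stoneCechUnit).continuousAt).congr this.symm
    by_cases hxV : x ∈ V
    · have : g =ᶠ[𝓝 x] (fun _ => (0:ℝ)) :=
        eventually_of_mem (hV.mem_nhds hxV) (fun y hy => by
          simp [hg, disjoint_right.1 hdisj hy])
      have hgx : g x = 0 := by simp [hg, hxU]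
      rw [ContinuousAt, hgx]
      exact Tendsto.congr' this.symm tendsto_const_nhds
    · -- x ∉ U ∪ V : f(unit x) = 0, squeeze
      have hfx : f (stoneCechUnit x) = 0 := hnot x (by simp [hxU, hxV])
      have hgx : g x = 0 := by simp [hg, hxU]
      rw [ContinuousAt, hgx]
      have hfc : Tendsto (fun y => f (stoneCechUnit y)) (𝓝 x) (𝓝 0) := by
        have := ((map_continuous f).comp continuous_stoneCechUnit).continuousAt (x := x)
        rwa [ContinuousAt, Function.comp_apply, hfx] at this
      refine squeeze_zero (fun y => (hgmem y).1) (fun y => ?_) hfc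
      by_cases hy : y ∈ U
      · simp [hg, hy]
      · simp [hg, hy]; exact (hf01 _).1
  -- pack g into Icc 0 1
  set g' : X → Icc (0:ℝ) 1 := fun x => ⟨g x, hgmem x⟩ with hg'
  have hg'c : Continuous g' := Continuous.subtype_mk hgc _
  set G := stoneCechExtend hg'c with hG
  have hGext : ∀ x, G (stoneCechUnit x) = g' x := fun x =>
    congrFun (stoneCechExtend_extends hg'c) x
  have hGc : Continuous fun q => (G q : ℝ) := continuous_subtype_val.comp (continuous_stoneCechExtend hg'c)
  -- on closure U' : (G ·) = f
  have hEqU : EqOn (fun q => (G q : ℝ)) f (closure (stoneCechUnit '' U)) := by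
    refine EqOn.closure (fun q hq => ?_) hGc (map_continuous f)
    obtain ⟨x, hx, rfl⟩ := hq
    simp [hGext, hg', hg, hx]
  have hEqV : EqOn (fun q => (G q : ℝ)) 0 (closure (stoneCechUnit '' V)) := by
    refine EqOn.closure (fun q hq => ?_) hGc continuous_const
    obtain ⟨x, hx, rfl⟩ := hq
    simp [hGext, hg', hg, disjoint_right.1 hdisj hx]
  have h1 : (G p : ℝ) = f p := hEqU hpU
  have h0 : (G p : ℝ) = 0 := hEqV hpV
  have hfp0 : f p = 0 := by rw [← h1]; exact h0
  have hfp1 : f p = 1 := hf1 rfl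
  rw [hfp0] at hfp1; norm_num at hfp1

theorem stmt_7 {X : Type*} [TopologicalSpace X] [T35Space X]
    (U V : Set X) (hU : IsOpen U) (hV : IsOpen V) (hdisj : Disjoint U V)
    (W : Set (StoneCech X)) (hW : IsOpen W)
    (hWX : W ∩ Set.range (stoneCechUnit : X → StoneCech X) = stoneCechUnit '' (U ∪ V)) :
    Disjoint (W ∩ closure (stoneCechUnit '' U)) (W ∩ closure (stoneCechUnit '' V)) ∧
    IsOpen (W ∩ closure (stoneCechUnit '' U)) ∧
    IsOpen (W ∩ closure (stoneCechUnit '' V)) ∧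
    (W ∩ closure (stoneCechUnit '' U)) ∪ (W ∩ closure (stoneCechUnit '' V)) = W := by
  have hkey : ∀ ⦃p : StoneCech X⦄, p ∈ W → p ∈ closure (stoneCechUnit '' U) →
      p ∈ closure (stoneCechUnit '' V) → False :=
    fun p hpW hpU hpV => key U V hU hV hdisj W hW hWX hpW hpU hpV
  have hdis : Disjoint (W ∩ closure (stoneCechUnit '' U)) (W ∩ closure (stoneCechUnit '' V)) := by
    rw [Set.disjoint_left]
    rintro p ⟨hpW, hpU⟩ ⟨-, hpV⟩
    exact hkey hpW hpU hpV
  have hcup : (W ∩ closure (stoneCechUnit '' U)) ∪ (W ∩ closure (stoneCechUnit '' V)) = W := by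
    rw [← Set.inter_union_distrib_left]
    refine Set.inter_eq_left.2 ?_
    have h1 : W ⊆ closure (W ∩ Set.range (stoneCechUnit : X → StoneCech X)) :=
      denseRange_stoneCechUnit.open_subset_closure_inter hW
    rw [hWX, Set.image_union] at h1
    calc W ⊆ _ := h1
      _ ⊆ _ := by rw [closure_union]
  have hoU : IsOpen (W ∩ closure (stoneCechUnit '' U)) := by
    have : W ∩ closure (stoneCechUnit '' U) = W ∩ (closure (stoneCechUnit '' V))ᶜ := by
      ext p
      constructor
      · rintro ⟨hpW, hpU⟩
        exact ⟨hpW, fun hpV => hkey hpW hpU hpV⟩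
      · rintro ⟨hpW, hpV⟩
        rcases (hcup ▸ hpW : p ∈ _ ∪ _) with h | h
        · exact h
        · exact absurd h.2 hpV
    rw [this]
    exact hW.inter isClosed_closure.isOpen_compl
  have hoV : IsOpen (W ∩ closure (stoneCechUnit '' V)) := by
    have : W ∩ closure (stoneCechUnit '' V) = W ∩ (closure (stoneCechUnit '' U))ᶜ := by
      ext p
      constructor
      · rintro ⟨hpW, hpV⟩
        exact ⟨hpW, fun hpU => hkey hpW hpU hpV⟩
      · rintro ⟨hpW, hpU⟩
        rcases (hcup ▸ hpW : p ∈ _ ∪ _) with h | h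
        · exact absurd h.2 hpU
        · exact h
    rw [this]
    exact hW.inter isClosed_closure.isOpen_compl
  exact ⟨hdis, hoU, hoV, hcup⟩
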